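/- Let A be an abelian category. Suppose given morphisms f₁ : X ⟶ Y, f₂ : Y ⟶ Z, x : X ⟶ X', y : Y ⟶ Y', z : Z ⟶ Z', f₁' : X' ⟶ Y', f₂' : Y' ⟶ Z' with f₁ ≫ y = x ≫ f₁' and f₂ ≫ z = y ≫ f₂'. If two out of the three quadrangles — the left quadrangle (f₁, x, y, f₁'), the right quadrangle (f₂, y, z, f₂'), and the outer quadrangle (f₁ ≫ f₂, x, z, f₁' ≫ f₂') — are squares (have short exact diagonal sequences), then so is the third. -/
import Mathlib


open CategoryTheory CategoryTheory.Limits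

/-- A commutative quadrangle `(f, g, h, k)` (with `f ≫ h = g ≫ k`) in an abelian category is a
*weak square* if its diagonal sequence `A ⟶ B ⊞ C ⟶ D`, with first morphism `biprod.lift f g`
and second morphism `biprod.desc h (-k)`, is exact at `B ⊞ C`. -/
def IsWeakSquare {A : Type*} [Category A] [Abelian A] {W X Y Z : A}
    (f : W ⟶ X) (g : W ⟶ Y) (h : X ⟶ Z) (k : Y ⟶ Z) : Prop :=
  ∃ w : biprod.lift f g ≫ biprod.desc h (-k) = 0,
    (ShortComplex.mk (biprod.lift f g) (biprod.desc h (-k)) w).Exact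

/-- A commutative quadrangle is a *square* if its diagonal sequence is short exact:
`biprod.lift f g` is a monomorphism, `biprod.desc h (-k)` is an epimorphism, and the sequence
is exact at `B ⊞ C`. -/
def IsSquareQuad {A : Type*} [Category A] [Abelian A] {W X Y Z : A}
    (f : W ⟶ X) (g : W ⟶ Y) (h : X ⟶ Z) (k : Y ⟶ Z) : Prop :=
  IsWeakSquare f g h k ∧ Mono (biprod.lift f g) ∧ Epi (biprod.desc h (-k))

section Aux

variable {A : Type*} [Category A] [Abelian A]

lemma isPullback_iff_aux {W X Y Z : A} {f : W ⟶ X} {g : W ⟶ Y} {h : X ⟶ Z} {k : Y ⟶ Z}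
    (w : f ≫ h = g ≫ k) :
    IsPullback f g h k ↔ (IsWeakSquare f g h k ∧ Mono (biprod.lift f g)) := by
  have sq : CommSq f g h k := ⟨w⟩
  have hz : biprod.lift f g ≫ biprod.desc h (-k) = 0 := by
    simp [w]
  constructor
  · intro hp
    have hl : IsLimit (KernelFork.ofι (biprod.lift f g) hz) := hp.isLimitKernelFork
    exact ⟨⟨hz, ShortComplex.exact_of_f_is_kernel _ hl⟩, mono_of_isLimit_fork hl⟩
  · rintro ⟨⟨w0, hex⟩, hmono⟩
    haveI : Mono (ShortComplex.mk (biprod.lift f g) (biprod.desc h (-k)) w0).f := hmono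
    have hl : IsLimit (KernelFork.ofι (biprod.lift f g) w0) := hex.fIsKernel
    exact IsPullback.of_isLimit' sq (sq.isLimitEquivIsLimitKernelFork.symm hl)

lemma isPushout_iff_aux {W X Y Z : A} {f : W ⟶ X} {g : W ⟶ Y} {h : X ⟶ Z} {k : Y ⟶ Z}
    (w : f ≫ h = g ≫ k) :
    IsPushout f g h k ↔ (IsWeakSquare f g h k ∧ Epi (biprod.desc h (-k))) := by
  have sq : CommSq f g h k := ⟨w⟩
  have hz : biprod.lift f g ≫ biprod.desc h (-k) = 0 := by simp [w]
  have hz' : biprod.lift f (-g) ≫ biprod.desc h k = 0 := by simp [w]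
  let e : (X ⊞ Y : A) ≅ X ⊞ Y :=
    { hom := biprod.map (𝟙 X) (-𝟙 Y)
      inv := biprod.map (𝟙 X) (-𝟙 Y)
      hom_inv_id := by ext <;> simp
      inv_hom_id := by ext <;> simp }
  have he₁ : biprod.lift f (-g) ≫ e.hom = biprod.lift f g := by
    apply biprod.hom_ext <;> simp [e]
  have he₂ : e.hom ≫ biprod.desc h (-k) = biprod.desc h k := by
    apply biprod.hom_ext' <;> simp [e]
  have eS : ShortComplex.mk (biprod.lift f (-g)) (biprod.desc h k) hz' ≅
      ShortComplex.mk (biprod.lift f g) (biprod.desc h (-k)) hz :=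
    ShortComplex.isoMk (Iso.refl _) e (Iso.refl _) (by simpa using he₁.symm)
      (by simp [he₂])
  constructor
  · intro hp
    have hc : IsColimit (CokernelCofork.ofπ (biprod.desc h k) hz') :=
      hp.isColimitCokernelCofork
    have hex' : (ShortComplex.mk (biprod.lift f (-g)) (biprod.desc h k) hz').Exact :=
      ShortComplex.exact_of_g_is_cokernel _ hc
    refine ⟨⟨hz, ShortComplex.exact_of_iso eS hex'⟩, ?_⟩
    have hepi : Epi (biprod.desc h k) := epi_of_isColimit_cofork hc
    have : biprod.desc h (-k) = e.inv ≫ biprod.desc h k := by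
      rw [← he₂, Iso.inv_hom_id_assoc]
    rw [this]
    exact epi_comp _ _
  · rintro ⟨⟨w0, hex⟩, hepi⟩
    have hex' : (ShortComplex.mk (biprod.lift f (-g)) (biprod.desc h k) hz').Exact :=
      ShortComplex.exact_of_iso eS.symm hex
    haveI : Epi (ShortComplex.mk (biprod.lift f (-g)) (biprod.desc h k) hz').g := by
      show Epi (biprod.desc h k)
      rw [← he₂]
      exact epi_comp _ _
    have hc : IsColimit (CokernelCofork.ofπ (biprod.desc h k) hz') := hex'.gIsCokernel
    exact IsPushout.of_isColimit' sq (sq.isColimitEquivIsColimitCokernelCofork.symm hc)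

lemma isSquareQuad_iff_aux {W X Y Z : A} {f : W ⟶ X} {g : W ⟶ Y} {h : X ⟶ Z} {k : Y ⟶ Z}
    (w : f ≫ h = g ≫ k) :
    IsSquareQuad f g h k ↔ (IsPullback f g h k ∧ IsPushout f g h k) := by
  rw [isPullback_iff_aux w, isPushout_iff_aux w, IsSquareQuad]
  tauto

lemma mono_lift_right_aux {X Y Z X' Y' : A} {f₁ : X ⟶ Y} {f₂ : Y ⟶ Z} {x : X ⟶ X'}
    {y : Y ⟶ Y'} {f₁' : X' ⟶ Y'} (hPB : IsPullback f₁ x y f₁')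
    (hmono : Mono (biprod.lift (f₁ ≫ f₂) x)) : Mono (biprod.lift f₂ y) := by
  apply Preadditive.mono_of_cancel_zero
  intro T t ht
  have ht₁ : t ≫ f₂ = 0 := by simpa using ht =≫ biprod.fst
  have ht₂ : t ≫ y = 0 := by simpa using ht =≫ biprod.snd
  have hcomm : t ≫ y = (0 : T ⟶ X') ≫ f₁' := by simp [ht₂]
  have hu₁ : hPB.lift t 0 hcomm ≫ f₁ = t := hPB.lift_fst t 0 hcomm
  have hu₂ : hPB.lift t 0 hcomm ≫ x = 0 := hPB.lift_snd t 0 hcomm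
  have hcz : hPB.lift t 0 hcomm ≫ biprod.lift (f₁ ≫ f₂) x = 0 := by
    apply biprod.hom_ext <;> simp [reassoc_of% hu₁, hu₂, ht₁]
  have hu : hPB.lift t 0 hcomm = 0 := zero_of_comp_mono _ hcz
  rw [← hu₁, hu, zero_comp]

lemma epi_desc_left_aux {Y Z Y' Z' X' : A} {f₂ : Y ⟶ Z} {y : Y ⟶ Y'} {z : Z ⟶ Z'}
    {f₁' : X' ⟶ Y'} {f₂' : Y' ⟶ Z'} (hPO : IsPushout f₂ y z f₂')
    (hepi : Epi (biprod.desc z (-(f₁' ≫ f₂')))) : Epi (biprod.desc y (-f₁')) := by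
  apply Preadditive.epi_of_cancel_zero
  intro T t ht
  have ht₁ : y ≫ t = 0 := by simpa using biprod.inl ≫= ht
  have ht₂ : f₁' ≫ t = 0 := by
    have h2 := biprod.inr ≫= ht
    rw [biprod.inr_desc_assoc, comp_zero, Preadditive.neg_comp, neg_eq_zero] at h2
    exact h2
  have hcomm : f₂ ≫ (0 : Z ⟶ T) = y ≫ t := by simp [ht₁]
  have hu₁ : z ≫ hPO.desc 0 t hcomm = 0 := hPO.inl_desc 0 t hcomm
  have hu₂ : f₂' ≫ hPO.desc 0 t hcomm = t := hPO.inr_desc 0 t hcomm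
  have hcz : biprod.desc z (-(f₁' ≫ f₂')) ≫ hPO.desc 0 t hcomm = 0 := by
    apply biprod.hom_ext' <;>
      simp [hu₁, reassoc_of% ht₂, hu₂, ht₂]
  have hu : hPO.desc 0 t hcomm = 0 := zero_of_epi_comp _ hcz
  rw [← hu₂, hu, comp_zero]

end Aux

/-- Two-out-of-three for squares: if two of the left quadrangle `(f₁, x, y, f₁')`, the right
quadrangle `(f₂, y, z, f₂')` and the outer quadrangle `(f₁ ≫ f₂, x, z, f₁' ≫ f₂')` are
squares, then so is the third. -/
theorem square_two_out_of_three {A : Type*} [Category A] [Abelian A]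
    {X Y Z X' Y' Z' : A}
    (f₁ : X ⟶ Y) (f₂ : Y ⟶ Z) (x : X ⟶ X') (y : Y ⟶ Y') (z : Z ⟶ Z')
    (f₁' : X' ⟶ Y') (f₂' : Y' ⟶ Z')
    (comm₁ : f₁ ≫ y = x ≫ f₁') (comm₂ : f₂ ≫ z = y ≫ f₂') :
    (IsSquareQuad f₁ x y f₁' → IsSquareQuad f₂ y z f₂' →
       IsSquareQuad (f₁ ≫ f₂) x z (f₁' ≫ f₂')) ∧
    (IsSquareQuad f₁ x y f₁' → IsSquareQuad (f₁ ≫ f₂) x z (f₁' ≫ f₂') →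
       IsSquareQuad f₂ y z f₂') ∧
    (IsSquareQuad f₂ y z f₂' → IsSquareQuad (f₁ ≫ f₂) x z (f₁' ≫ f₂') →
       IsSquareQuad f₁ x y f₁') := by
  have wouter : (f₁ ≫ f₂) ≫ z = x ≫ (f₁' ≫ f₂') := by
    rw [Category.assoc, comm₂, ← Category.assoc, comm₁, Category.assoc]
  rw [isSquareQuad_iff_aux comm₁, isSquareQuad_iff_aux comm₂, isSquareQuad_iff_aux wouter]
  refine ⟨?_, ?_, ?_⟩
  · rintro ⟨hPB₁, hPO₁⟩ ⟨hPB₂, hPO₂⟩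
    exact ⟨hPB₁.paste_horiz hPB₂, hPO₁.paste_horiz hPO₂⟩
  · rintro ⟨hPB₁, hPO₁⟩ ⟨hPBo, hPOo⟩
    have hPO₂ : IsPushout f₂ y z f₂' := IsPushout.of_left hPOo comm₂ hPO₁
    have hmono : Mono (biprod.lift f₂ y) :=
      mono_lift_right_aux hPB₁ ((isPullback_iff_aux wouter).1 hPBo).2
    have hPB₂ : IsPullback f₂ y z f₂' :=
      (isPullback_iff_aux comm₂).2 ⟨((isPushout_iff_aux comm₂).1 hPO₂).1, hmono⟩
    exact ⟨hPB₂, hPO₂⟩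
  · rintro ⟨hPB₂, hPO₂⟩ ⟨hPBo, hPOo⟩
    have hPB₁ : IsPullback f₁ x y f₁' := IsPullback.of_right hPBo comm₁ hPB₂
    have hepi : Epi (biprod.desc y (-f₁')) :=
      epi_desc_left_aux hPO₂ ((isPushout_iff_aux wouter).1 hPOo).2
    have hPO₁ : IsPushout f₁ x y f₁' :=
      (isPushout_iff_aux comm₁).2 ⟨((isPullback_iff_aux comm₁).1 hPB₁).1, hepi⟩
    exact ⟨hPB₁, hPO₁⟩
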